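/- Let G be a countable graph, e an edge, and Sfin(e) the finite span of e. Then every vertex on the boundary of Sfin(e) has infinite degree. -/
import Mathlib


/-- The edge `e` is incident to the vertex `v`. -/
def Inc {V E : Type*} (startE endE : E → V) (v : V) (e : E) : Prop :=
  startE e = v ∨ endE e = v

/-- One step of a path of finite weight: the edges `a` and `b` share a vertex of finite
degree (no infinite star is crossed). -/
def FinStep {V E : Type*} (startE endE : E → V) (a b : E) : Prop :=
  ∃ v : V, Inc startE endE v a ∧ Inc startE endE v b ∧
    {f : E | Inc startE endE v f}.Finite

/-- The finite span `Sfin(e)`: the set of edges joined to `e` by a path of finite weight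
(including `e` itself, via the empty path). -/
def Sfin {V E : Type*} (startE endE : E → V) (e : E) : Set E :=
  {e' : E | Relation.ReflTransGen (FinStep startE endE) e e'}

/-- Every vertex on the boundary of the finite span `Sfin(e)` (a vertex incident
both to an edge of `Sfin(e)` and to an edge outside of it) has infinite degree. -/
theorem boundary_of_finite_span_has_infinite_degree {V E : Type*} [Countable V] [Countable E]
    (startE endE : E → V) (e : E) (v : V)
    (h₁ : ∃ a ∈ Sfin startE endE e, Inc startE endE v a)
    (h₂ : ∃ b ∉ Sfin startE endE e, Inc startE endE v b) :
    {f : E | Inc startE endE v f}.Infinite := by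
  obtain ⟨a, ha, hav⟩ := h₁
  obtain ⟨b, hb, hbv⟩ := h₂
  intro hfin
  exact hb (ha.tail ⟨v, hav, hbv, hfin⟩)
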